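/- For all positive integers n, k and every partition α with at most k parts each at most n, the multiset of hook lengths of the skew diagram SQ equals the disjoint union of the multiset of hook lengths of the rectangle R and the multiset of hook lengths of the Young diagram D; that is, H(SQ) = H(R) ⊎ H(D) as multisets. -/

import Mathlib

/-- The skew diagram with rows `a,…,b`, where row `i` contains the cells
`(i,j)` for `lo i ≤ j ≤ hi i`. -/
def skewD (a b : ℕ) (lo hi : ℕ → ℕ) : Finset (ℕ × ℕ) :=
  (Finset.Icc a b).biUnion fun i => (Finset.Icc (lo i) (hi i)).image fun j => (i, j)

/-- Arm length: number of cells of `G` in the same row, strictly to the right. -/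
def arm (G : Finset (ℕ × ℕ)) (x : ℕ × ℕ) : ℕ :=
  (G.filter fun y => y.1 = x.1 ∧ x.2 < y.2).card

/-- Leg length: number of cells of `G` in the same column, strictly below
(rows are numbered bottom to top). -/
def leg (G : Finset (ℕ × ℕ)) (x : ℕ × ℕ) : ℕ :=
  (G.filter fun y => y.2 = x.2 ∧ y.1 < x.1).card

/-- Multiset of arm–leg pairs of the cells of `E`, computed in `G`. -/
def AL (G E : Finset (ℕ × ℕ)) : Multiset (ℕ × ℕ) :=
  E.val.map fun x => (arm G x, leg G x)

/-- Multiset of hook lengths of `G`. -/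
def hookMS (G : Finset (ℕ × ℕ)) : Multiset ℕ :=
  G.val.map fun x => arm G x + leg G x + 1

/-- The skew diagram `T`. -/
def TT (n k : ℕ) (α : ℕ → ℕ) : Finset (ℕ × ℕ) :=
  skewD 1 k (fun i => α 1 - α i + 1) (fun i => n + α 1 - α i)

/-- The skew diagram `V`. -/
def VV (n k : ℕ) (α : ℕ → ℕ) : Finset (ℕ × ℕ) :=
  skewD (k + 1) (2 * k) (fun i => n + α 1 - α (i - k) + 1) (fun _ => n + α 1)

/-- The skew diagram `SQ = T ∪ V`. -/
def SQ (n k : ℕ) (α : ℕ → ℕ) : Finset (ℕ × ℕ) :=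
  TT n k α ∪ VV n k α

/-- The `k × n` rectangle `R`. -/
def RR (n k : ℕ) : Finset (ℕ × ℕ) :=
  skewD 1 k (fun _ => 1) (fun _ => n)

/-- The Young diagram `D` of `α`. -/
def DD (k : ℕ) (α : ℕ → ℕ) : Finset (ℕ × ℕ) :=
  skewD 1 k (fun _ => 1) (fun i => α (k + 1 - i))

/-- The 180° rotation `T*` of `T`. -/
def Tstar (n k : ℕ) (α : ℕ → ℕ) : Finset (ℕ × ℕ) :=
  skewD 1 k (fun i => α (k + 1 - i) - α k + 1) (fun i => n + α (k + 1 - i) - α k)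

open Finset

namespace RV

variable {γ : Type*}

lemma union_val_disj {α : Type*} [DecidableEq α] (s t : Finset α) (h : Disjoint s t) :
    (s ∪ t).val = s.val + t.val := by
  rw [← Finset.disjUnion_eq_union s t h]; rfl

lemma sum_singleton_map (t : Finset ℕ) (g : ℕ → γ) :
    (∑ j ∈ t, ({g j} : Multiset γ)) = t.val.map g := by
  induction t using Finset.induction with
  | empty => simp
  | @insert a s ha ih =>
      rw [Finset.sum_insert ha, ih, Finset.insert_val_of_notMem ha, Multiset.map_cons,
        ← Multiset.singleton_add]

lemma biUnion_rows_map (s : Finset ℕ) (lo hi : ℕ → ℕ) (f : ℕ × ℕ → γ) :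
    ((s.biUnion fun i => (Icc (lo i) (hi i)).image fun j => (i, j)).val.map f)
      = ∑ i ∈ s, ((Icc (lo i) (hi i)).val.map fun j => f (i, j)) := by
  induction s using Finset.induction with
  | empty => simp
  | @insert a s ha ih =>
      rw [Finset.biUnion_insert]
      have hd : Disjoint ((Icc (lo a) (hi a)).image fun j => (a, j))
          (s.biUnion fun i => (Icc (lo i) (hi i)).image fun j => (i, j)) := by
        rw [Finset.disjoint_left]
        intro x hx hx'
        simp only [Finset.mem_image, Finset.mem_biUnion] at hx hx'
        obtain ⟨j, _, rfl⟩ := hx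
        obtain ⟨i, hi1, j', _, hj'⟩ := hx'
        have : i = a := congrArg Prod.fst hj'
        exact ha (this ▸ hi1)
      rw [union_val_disj _ _ hd, Multiset.map_add, ih, Finset.sum_insert ha]
      congr 1
      rw [Finset.image_val_of_injOn (by intro x _ y _ hxy; simpa using congrArg Prod.snd hxy),
        Multiset.map_map]
      rfl

lemma mem_skewD {a b : ℕ} {lo hi : ℕ → ℕ} {x : ℕ × ℕ} :
    x ∈ skewD a b lo hi ↔ a ≤ x.1 ∧ x.1 ≤ b ∧ lo x.1 ≤ x.2 ∧ x.2 ≤ hi x.1 := by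
  obtain ⟨p, q⟩ := x
  simp only [skewD, Finset.mem_biUnion, Finset.mem_image, Finset.mem_Icc]
  constructor
  · rintro ⟨i, ⟨h1, h2⟩, j, ⟨h3, h4⟩, hij⟩
    obtain ⟨rfl, rfl⟩ := Prod.mk.injEq .. ▸ hij
    exact ⟨h1, h2, h3, h4⟩
  · rintro ⟨h1, h2, h3, h4⟩
    exact ⟨p, ⟨h1, h2⟩, q, ⟨h3, h4⟩, rfl⟩

lemma arm_skewD (a b : ℕ) (lo hi : ℕ → ℕ) (i j : ℕ) (h1 : a ≤ i) (h2 : i ≤ b)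
    (h3 : lo i ≤ j) : arm (skewD a b lo hi) (i, j) = hi i - j := by
  have hset : (skewD a b lo hi).filter (fun y => y.1 = i ∧ j < y.2)
      = (Icc (j + 1) (hi i)).image fun t => (i, t) := by
    ext ⟨p, q⟩
    simp only [Finset.mem_filter, mem_skewD, Finset.mem_image, Finset.mem_Icc]
    constructor
    · rintro ⟨⟨hp1, hp2, hq1, hq2⟩, rfl, hj⟩
      exact ⟨q, ⟨by omega, hq2⟩, rfl⟩
    · rintro ⟨t, ⟨ht1, ht2⟩, hij⟩
      obtain ⟨rfl, rfl⟩ := Prod.mk.injEq .. ▸ hij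
      exact ⟨⟨h1, h2, by omega, ht2⟩, rfl, by omega⟩
  rw [arm, hset, Finset.card_image_of_injective _ (fun x y h => by simpa using h),
    Nat.card_Icc]
  omega

lemma leg_skewD (a b : ℕ) (lo hi : ℕ → ℕ) (i j : ℕ) :
    leg (skewD a b lo hi) (i, j)
      = ((Icc a b).filter fun p => p < i ∧ lo p ≤ j ∧ j ≤ hi p).card := by
  have hset : (skewD a b lo hi).filter (fun y => y.2 = j ∧ y.1 < i)
      = ((Icc a b).filter fun p => p < i ∧ lo p ≤ j ∧ j ≤ hi p).image fun p => (p, j) := by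
    ext ⟨p, q⟩
    simp only [Finset.mem_filter, mem_skewD, Finset.mem_image, Finset.mem_Icc]
    constructor
    · rintro ⟨⟨hp1, hp2, hq1, hq2⟩, rfl, hpi⟩
      exact ⟨p, ⟨⟨hp1, hp2⟩, hpi, hq1, hq2⟩, rfl⟩
    · rintro ⟨t, ⟨⟨ht1, ht2⟩, hti, hj1, hj2⟩, hij⟩
      obtain ⟨rfl, rfl⟩ := Prod.mk.injEq .. ▸ hij
      exact ⟨⟨ht1, ht2, hj1, hj2⟩, rfl, hti⟩
  rw [leg, hset, Finset.card_image_of_injective _ (fun x y h => by simpa using h)]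

lemma arm_union (G H : Finset (ℕ × ℕ)) (h : Disjoint G H) (x : ℕ × ℕ) :
    arm (G ∪ H) x = arm G x + arm H x := by
  rw [arm, arm, arm, Finset.filter_union,
    Finset.card_union_of_disjoint (Finset.disjoint_filter_filter h)]

lemma leg_union (G H : Finset (ℕ × ℕ)) (h : Disjoint G H) (x : ℕ × ℕ) :
    leg (G ∪ H) x = leg G x + leg H x := by
  rw [leg, leg, leg, Finset.filter_union,
    Finset.card_union_of_disjoint (Finset.disjoint_filter_filter h)]

lemma map_Icc_rev (a b : ℕ) (f : ℕ → γ) :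
    (Icc a b).val.map f = (range (b + 1 - a)).val.map fun m => f (b - m) := by
  have himg : Icc a b = (range (b + 1 - a)).image fun m => b - m := by
    ext t
    simp only [Finset.mem_Icc, Finset.mem_image, Finset.mem_range]
    constructor
    · intro h; exact ⟨b - t, by omega, by omega⟩
    · rintro ⟨m, hm, rfl⟩; omega
  rw [himg, Finset.image_val_of_injOn (by
    intro x hx y hy hxy
    simp only [Finset.coe_range, Set.mem_Iio] at hx hy
    dsimp only at hxy
    omega), Multiset.map_map]
  rfl

lemma map_Icc_fwd (a b : ℕ) (f : ℕ → γ) :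
    (Icc a b).val.map f = (range (b + 1 - a)).val.map fun m => f (a + m) := by
  have himg : Icc a b = (range (b + 1 - a)).image fun m => a + m := by
    ext t
    simp only [Finset.mem_Icc, Finset.mem_image, Finset.mem_range]
    constructor
    · intro h; exact ⟨t - a, by omega, by omega⟩
    · rintro ⟨m, hm, rfl⟩; omega
  rw [himg, Finset.image_val_of_injOn (by
    intro x hx y hy hxy
    simp only [Finset.coe_range, Set.mem_Iio] at hx hy
    dsimp only at hxy
    omega), Multiset.map_map]
  rfl

lemma range_val_split (A n : ℕ) (h1 : A ≤ n) (h2 : 0 < n) :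
    (range n).val = (range A).val + (Icc A (n - 1)).val := by
  have : range n = (range A).disjUnion (Icc A (n - 1)) (by
      rw [Finset.disjoint_left]
      intro x hx hx'
      simp only [Finset.mem_range] at hx
      simp only [Finset.mem_Icc] at hx'
      omega) := by
    ext t
    simp only [Finset.mem_range, Finset.disjUnion_eq_union, Finset.mem_union, Finset.mem_Icc]
    omega
  rw [this]; rfl

lemma Icc_sum_split {β : Type*} [AddCommMonoid β] (a m b : ℕ) (F : ℕ → β)
    (h1 : a ≤ m + 1) (h2 : m ≤ b) :
    ∑ i ∈ Icc a b, F i = (∑ i ∈ Icc a m, F i) + ∑ i ∈ Icc (m + 1) b, F i := by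
  have hd : Disjoint (Icc a m) (Icc (m + 1) b) := by
    rw [Finset.disjoint_left]
    intro x hx hx'
    simp only [Finset.mem_Icc] at hx hx'
    omega
  have : Icc a b = Icc a m ∪ Icc (m + 1) b := by
    ext t; simp only [Finset.mem_Icc, Finset.mem_union]; omega
  rw [this, Finset.sum_union hd]

lemma Icc_val_split (a m b : ℕ) (h1 : a ≤ m + 1) (h2 : m ≤ b) :
    (Icc a b).val = (Icc a m).val + (Icc (m + 1) b).val := by
  have hd : Disjoint (Icc a m) (Icc (m + 1) b) := by
    rw [Finset.disjoint_left]
    intro x hx hx'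
    simp only [Finset.mem_Icc] at hx hx'
    omega
  have : Icc a b = Icc a m ∪ Icc (m + 1) b := by
    ext t; simp only [Finset.mem_Icc, Finset.mem_union]; omega
  rw [this, union_val_disj _ _ hd]

lemma swap1 (s t : Finset ℕ) (p : ℕ → ℕ → Prop) [∀ i j, Decidable (p i j)]
    (F : ℕ → ℕ → γ) :
    ∑ i ∈ s, ((t.filter fun j => p i j).val.map fun j => F i j)
      = ∑ j ∈ t, ((s.filter fun i => p i j).val.map fun i => F i j) := by
  induction s using Finset.induction with
  | empty => simp
  | @insert a s ha ih =>
      rw [Finset.sum_insert ha, ih]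
      have step : ∀ j ∈ t,
          (((insert a s).filter fun i => p i j).val.map fun i => F i j)
            = (if p a j then ({F a j} : Multiset γ) else 0)
              + ((s.filter fun i => p i j).val.map fun i => F i j) := by
        intro j _
        rw [Finset.filter_insert]
        by_cases h : p a j
        · rw [if_pos h, if_pos h, Finset.insert_val_of_notMem
            (fun hc => ha (Finset.mem_of_mem_filter a hc)), Multiset.map_cons,
            ← Multiset.singleton_add]
        · rw [if_neg h, if_neg h, zero_add]
      rw [Finset.sum_congr rfl step, Finset.sum_add_distrib]
      congr 1
      rw [← Finset.sum_filter, sum_singleton_map]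

lemma filter_upward (K : ℕ) (p : ℕ → Prop) [DecidablePred p]
    (h : ∀ r r', 1 ≤ r → r ≤ r' → r' ≤ K → p r → p r') :
    (Icc 1 K).filter p = Icc (K + 1 - ((Icc 1 K).filter p).card) K := by
  have hcard : ((Icc 1 K).filter p).card ≤ K := by
    have := Finset.card_filter_le (Icc 1 K) p
    rw [Nat.card_Icc] at this; omega
  ext r
  simp only [Finset.mem_filter, Finset.mem_Icc]
  constructor
  · rintro ⟨⟨h1, h2⟩, hp⟩
    refine ⟨?_, h2⟩
    have hsub : Icc r K ⊆ (Icc 1 K).filter p := by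
      intro x hx
      rw [Finset.mem_Icc] at hx
      exact Finset.mem_filter.2 ⟨Finset.mem_Icc.2 ⟨by omega, hx.2⟩, h r x h1 hx.1 hx.2 hp⟩
    have := Finset.card_le_card hsub
    rw [Nat.card_Icc] at this; omega
  · rintro ⟨h1, h2⟩
    have hr1 : 1 ≤ r := by omega
    refine ⟨⟨hr1, h2⟩, ?_⟩
    by_contra hnp
    have hsub : (Icc 1 K).filter p ⊆ Icc (r + 1) K := by
      intro x hxs
      rcases Finset.mem_filter.1 hxs with ⟨hx, hpx⟩
      rw [Finset.mem_Icc] at hx ⊢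
      refine ⟨?_, hx.2⟩
      by_contra hxr
      exact hnp (h x r hx.1 (by omega) (by omega) hpx)
    have := Finset.card_le_card hsub
    rw [Nat.card_Icc] at this; omega

lemma filter_downward (K : ℕ) (p : ℕ → Prop) [DecidablePred p]
    (h : ∀ r r', 1 ≤ r → r ≤ r' → r' ≤ K → p r' → p r) :
    (Icc 1 K).filter p = Icc 1 ((Icc 1 K).filter p).card := by
  have hcard : ((Icc 1 K).filter p).card ≤ K := by
    have := Finset.card_filter_le (Icc 1 K) p
    rw [Nat.card_Icc] at this; omega
  ext r
  simp only [Finset.mem_filter, Finset.mem_Icc]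
  constructor
  · rintro ⟨⟨h1, h2⟩, hp⟩
    refine ⟨h1, ?_⟩
    have hsub : Icc 1 r ⊆ (Icc 1 K).filter p := by
      intro x hx
      rw [Finset.mem_Icc] at hx
      exact Finset.mem_filter.2 ⟨Finset.mem_Icc.2 ⟨hx.1, by omega⟩,
        h x r hx.1 hx.2 h2 hp⟩
    have := Finset.card_le_card hsub
    rw [Nat.card_Icc] at this; omega
  · rintro ⟨h1, h2⟩
    refine ⟨⟨h1, by omega⟩, ?_⟩
    by_contra hnp
    have hsub : (Icc 1 K).filter p ⊆ Icc 1 (r - 1) := by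
      intro x hxs
      rcases Finset.mem_filter.1 hxs with ⟨hx, hpx⟩
      rw [Finset.mem_Icc] at hx ⊢
      refine ⟨hx.1, ?_⟩
      by_contra hxr
      exact hnp (h r x h1 (by omega) hx.2 hpx)
    have := Finset.card_le_card hsub
    rw [Nat.card_Icc] at this; omega

lemma range_cons (d : ℕ) :
    (d ::ₘ (range d).val : Multiset ℕ) = 0 ::ₘ (range d).val.map (fun t => t + 1) := by
  induction d with
  | zero => simp
  | succ d ih =>
      have hval : (range (d + 1)).val = d ::ₘ (range d).val := Multiset.range_succ d
      rw [hval, Multiset.map_cons, Multiset.cons_swap 0, ← ih, Multiset.cons_swap]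

lemma swap0 (s t : Finset ℕ) (F : ℕ → ℕ → γ) :
    ∑ i ∈ s, (t.val.map fun j => F i j) = ∑ j ∈ t, (s.val.map fun i => F i j) := by
  induction s using Finset.induction with
  | empty => simp
  | @insert a s ha ih =>
      rw [Finset.sum_insert ha, ih]
      have step : ∀ j ∈ t, ((insert a s).val.map fun i => F i j)
          = ({F a j} : Multiset γ) + (s.val.map fun i => F i j) := by
        intro j _
        rw [Finset.insert_val_of_notMem ha, Multiset.map_cons, ← Multiset.singleton_add]
      rw [Finset.sum_congr rfl step, Finset.sum_add_distrib, sum_singleton_map]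
lemma skewD_val_map (a b : ℕ) (lo hi : ℕ → ℕ) (f : ℕ × ℕ → γ) :
    (skewD a b lo hi).val.map f
      = ∑ i ∈ Icc a b, ((Icc (lo i) (hi i)).val.map fun j => f (i, j)) :=
  biUnion_rows_map (Icc a b) lo hi f

lemma hookMS_RR (n k : ℕ) (hn : 0 < n) :
    hookMS (RR n k) = ∑ i ∈ Icc 1 k, (range n).val.map (fun m => m + i) := by
  rw [show RR n k = skewD 1 k (fun _ => 1) (fun _ => n) from rfl]
  rw [hookMS, skewD_val_map]
  apply Finset.sum_congr rfl
  intro i hi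
  rw [Finset.mem_Icc] at hi
  rw [map_Icc_rev, show n + 1 - 1 = n from by omega]
  apply Multiset.map_congr rfl
  intro m hm
  rw [← Finset.mem_def, Finset.mem_range] at hm
  rw [arm_skewD 1 k (fun _ => 1) (fun _ => n) i (n - m) hi.1 hi.2 (by show (1:ℕ) ≤ n - m; omega),
    leg_skewD]
  have hflt : (Icc 1 k).filter (fun p => p < i ∧ (fun _ => 1) p ≤ n - m ∧ n - m ≤ (fun _ => n) p)
      = Icc 1 (i - 1) := by
    ext p
    simp only [Finset.mem_filter, Finset.mem_Icc]
    omega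
  rw [hflt, Nat.card_Icc]
  omega

lemma hookMS_DD (k : ℕ) (α : ℕ → ℕ) (hk : 0 < k)
    (hmono : ∀ i j, 1 ≤ i → i ≤ j → j ≤ k → α j ≤ α i) :
    hookMS (DD k α) = ∑ r ∈ Icc 1 k, (range (α r)).val.map
      (fun m => m + 1 + ((Icc (r + 1) k).filter fun q => α r ≤ α q + m).card) := by
  rw [show DD k α = skewD 1 k (fun _ => 1) (fun i => α (k + 1 - i)) from rfl]
  rw [hookMS, skewD_val_map]
  have main : ∀ i ∈ Icc 1 k,
      ((Icc ((fun _ => 1) i) ((fun i => α (k + 1 - i)) i)).val.map fun j =>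
        arm (skewD 1 k (fun _ => 1) fun i => α (k + 1 - i)) (i, j)
          + leg (skewD 1 k (fun _ => 1) fun i => α (k + 1 - i)) (i, j) + 1)
      = (range (α (k + 1 - i))).val.map
          (fun m => m + 1 + ((Icc 1 (i - 1)).filter
            fun p => α (k + 1 - i) ≤ α (k + 1 - p) + m).card) := by
    intro i hi
    rw [Finset.mem_Icc] at hi
    rw [map_Icc_rev]
    dsimp only
    rw [show α (k + 1 - i) + 1 - 1 = α (k + 1 - i) from by omega]
    apply Multiset.map_congr rfl
    intro m hm
    rw [← Finset.mem_def, Finset.mem_range] at hm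
    rw [arm_skewD 1 k (fun _ => 1) (fun i => α (k + 1 - i)) i (α (k + 1 - i) - m)
        hi.1 hi.2 (by show (1:ℕ) ≤ α (k + 1 - i) - m; omega), leg_skewD]
    have hflt : (Icc 1 k).filter (fun p => p < i ∧ (fun _ => 1) p ≤ α (k + 1 - i) - m
          ∧ α (k + 1 - i) - m ≤ (fun p => α (k + 1 - p)) p)
        = (Icc 1 (i - 1)).filter fun p => α (k + 1 - i) ≤ α (k + 1 - p) + m := by
      ext p
      simp only [Finset.mem_filter, Finset.mem_Icc]
      omega
    rw [hflt]
    omega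
  rw [Finset.sum_congr rfl main]
  apply Finset.sum_nbij' (fun i => k + 1 - i) (fun r => k + 1 - r)
  · intro a ha; rw [Finset.mem_Icc] at ha ⊢; omega
  · intro a ha; rw [Finset.mem_Icc] at ha ⊢; omega
  · intro a ha; rw [Finset.mem_Icc] at ha; omega
  · intro a ha; rw [Finset.mem_Icc] at ha; omega
  · intro i hi
    rw [Finset.mem_Icc] at hi
    congr 1
    funext m
    congr 1
    apply Finset.card_nbij' (fun p => k + 1 - p) (fun q => k + 1 - q)
    · intro p hp
      dsimp only
      rw [Finset.mem_coe, Finset.mem_filter, Finset.mem_Icc] at hp ⊢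
      exact ⟨by omega, hp.2⟩
    · intro q hq
      dsimp only
      rw [Finset.mem_coe, Finset.mem_filter, Finset.mem_Icc] at hq ⊢
      refine ⟨by omega, ?_⟩
      rw [show k + 1 - (k + 1 - q) = q from by omega]
      exact hq.2
    · intro p hp; rw [Finset.mem_coe, Finset.mem_filter, Finset.mem_Icc] at hp; dsimp only; omega
    · intro q hq; rw [Finset.mem_coe, Finset.mem_filter, Finset.mem_Icc] at hq; dsimp only; omega
lemma hookMS_SQ (n k : ℕ) (α : ℕ → ℕ) (hn : 0 < n) (hk : 0 < k) (hα1 : α 1 ≤ n)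
    (hmono : ∀ i j, 1 ≤ i → i ≤ j → j ≤ k → α j ≤ α i) :
    hookMS (SQ n k α)
      = (∑ i ∈ Icc 1 k, (range n).val.map
          (fun m => m + 1 + ((Icc 1 (i - 1)).filter fun p => α p ≤ α i + m).card))
        + ∑ r ∈ Icc 1 k, (range (α r)).val.map
          (fun m => m + r + ((Icc 1 k).filter fun p => α p ≤ m).card) := by
  have hTd : TT n k α = skewD 1 k (fun i => α 1 - α i + 1) (fun i => n + α 1 - α i) := rfl
  have hVd : VV n k α
      = skewD (k + 1) (2 * k) (fun i => n + α 1 - α (i - k) + 1) (fun _ => n + α 1) := rfl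
  have hdisj : Disjoint (TT n k α) (VV n k α) := by
    rw [Finset.disjoint_left]
    intro x hx hx'
    rw [hTd, mem_skewD] at hx
    rw [hVd, mem_skewD] at hx'
    omega
  rw [hookMS, show SQ n k α = TT n k α ∪ VV n k α from rfl, union_val_disj _ _ hdisj,
    Multiset.map_add]
  congr 1
  -- T part
  · rw [show (TT n k α).val
        = (skewD 1 k (fun i => α 1 - α i + 1) (fun i => n + α 1 - α i)).val from rfl,
      skewD_val_map]
    apply Finset.sum_congr rfl
    intro i hi
    rw [Finset.mem_Icc] at hi
    have hai : α i ≤ α 1 := hmono 1 i le_rfl hi.1 hi.2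
    rw [map_Icc_rev]
    rw [show n + α 1 - α i + 1 - (α 1 - α i + 1) = n from by omega]
    apply Multiset.map_congr rfl
    intro m hm
    rw [← Finset.mem_def, Finset.mem_range] at hm
    try dsimp only
    have harm : arm (TT n k α ∪ VV n k α) (i, n + α 1 - α i - m) = m := by
      rw [arm_union _ _ hdisj]
      have h1 : arm (TT n k α) (i, n + α 1 - α i - m) = m := by
        rw [hTd, arm_skewD 1 k _ _ i _ hi.1 hi.2 (by show α 1 - α i + 1 ≤ _; omega)]
        try dsimp only
        omega
      have h2 : arm (VV n k α) (i, n + α 1 - α i - m) = 0 := by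
        rw [arm, Finset.card_eq_zero, Finset.eq_empty_iff_forall_notMem]
        intro y hy
        rw [Finset.mem_filter, hVd, mem_skewD] at hy
        omega
      omega
    have hleg : leg (TT n k α ∪ VV n k α) (i, n + α 1 - α i - m)
        = ((Icc 1 (i - 1)).filter fun p => α p ≤ α i + m).card := by
      rw [leg_union _ _ hdisj]
      have h2 : leg (VV n k α) (i, n + α 1 - α i - m) = 0 := by
        rw [hVd, leg_skewD, Finset.card_eq_zero, Finset.eq_empty_iff_forall_notMem]
        intro p hp
        rw [Finset.mem_filter, Finset.mem_Icc] at hp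
        omega
      have h1 : leg (TT n k α) (i, n + α 1 - α i - m)
          = ((Icc 1 (i - 1)).filter fun p => α p ≤ α i + m).card := by
        rw [hTd, leg_skewD]
        congr 1
        ext p
        simp only [Finset.mem_filter, Finset.mem_Icc]
        constructor
        · rintro ⟨⟨hp1, hp2⟩, hpi, hc1, hc2⟩
          have hA := hmono p i hp1 (by omega) hi.2
          have hB := hmono 1 p le_rfl hp1 hp2
          omega
        · rintro ⟨⟨hp1, hp2⟩, hcond⟩
          have hA := hmono p i hp1 (by omega) hi.2
          have hB := hmono 1 p le_rfl hp1 (by omega)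
          omega
      omega
    rw [harm, hleg]
    omega
  -- V part
  · rw [show (VV n k α).val
        = (skewD (k + 1) (2 * k) (fun i => n + α 1 - α (i - k) + 1)
            (fun _ => n + α 1)).val from rfl,
      skewD_val_map]
    apply Finset.sum_nbij' (fun i => i - k) (fun r => k + r)
    · intro a ha; rw [Finset.mem_Icc] at ha ⊢; omega
    · intro a ha; rw [Finset.mem_Icc] at ha ⊢; omega
    · intro a ha; rw [Finset.mem_Icc] at ha; omega
    · intro a ha; rw [Finset.mem_Icc] at ha; omega
    · intro i hi
      rw [Finset.mem_Icc] at hi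
      have haik : α (i - k) ≤ α 1 := hmono 1 (i - k) le_rfl (by omega) (by omega)
      rw [map_Icc_rev]
      rw [show n + α 1 + 1 - (n + α 1 - α (i - k) + 1) = α (i - k) from by omega]
      apply Multiset.map_congr rfl
      intro m hm
      rw [← Finset.mem_def, Finset.mem_range] at hm
      try dsimp only
      have harm : arm (TT n k α ∪ VV n k α) (i, n + α 1 - m) = m := by
        rw [arm_union _ _ hdisj]
        have h1 : arm (TT n k α) (i, n + α 1 - m) = 0 := by
          rw [arm, Finset.card_eq_zero, Finset.eq_empty_iff_forall_notMem]
          intro y hy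
          rw [Finset.mem_filter, hTd, mem_skewD] at hy
          omega
        have h2 : arm (VV n k α) (i, n + α 1 - m) = m := by
          rw [hVd, arm_skewD (k + 1) (2 * k) _ _ i _ hi.1 hi.2
            (by show n + α 1 - α (i - k) + 1 ≤ _; omega)]
          try dsimp only
          omega
        omega
      have hleg : leg (TT n k α ∪ VV n k α) (i, n + α 1 - m)
          = ((Icc 1 k).filter fun p => α p ≤ m).card + (i - k - 1) := by
        rw [leg_union _ _ hdisj]
        have h1 : leg (TT n k α) (i, n + α 1 - m)
            = ((Icc 1 k).filter fun p => α p ≤ m).card := by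
          rw [hTd, leg_skewD]
          congr 1
          ext p
          simp only [Finset.mem_filter, Finset.mem_Icc]
          constructor
          · rintro ⟨⟨hp1, hp2⟩, hpi, hc1, hc2⟩
            have hB := hmono 1 p le_rfl hp1 hp2
            omega
          · rintro ⟨⟨hp1, hp2⟩, hcond⟩
            have hB := hmono 1 p le_rfl hp1 hp2
            omega
        have h2 : leg (VV n k α) (i, n + α 1 - m) = i - k - 1 := by
          rw [hVd, leg_skewD]
          have hflt : (Icc (k + 1) (2 * k)).filter
              (fun p => p < i ∧ n + α 1 - α (p - k) + 1 ≤ n + α 1 - m ∧ n + α 1 - m ≤ n + α 1)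
              = Icc (k + 1) (i - 1) := by
            ext p
            simp only [Finset.mem_filter, Finset.mem_Icc]
            constructor
            · rintro ⟨⟨hp1, hp2⟩, hpi, hc1, hc2⟩
              omega
            · rintro ⟨hp1, hp2⟩
              have hC := hmono (p - k) (i - k) (by omega) (by omega) (by omega)
              omega
          rw [hflt, Nat.card_Icc]
          omega
        omega
      rw [harm, hleg]
      omega
lemma degree (K : ℕ) (α : ℕ → ℕ) (m : ℕ)
    (hmono : ∀ i j, 1 ≤ i → i ≤ j → j ≤ K → α j ≤ α i) :
    (Icc 1 K).val.map (fun i => ((Icc 1 (i - 1)).filter fun p => α p ≤ α i + m).card)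
      = (Icc 1 K).val.map
          (fun r => ((Icc (r + 1) K).filter fun q => α r ≤ α q + m).card) := by
  induction K with
  | zero => simp
  | succ K ih =>
      have hmono' : ∀ i j, 1 ≤ i → i ≤ j → j ≤ K → α j ≤ α i :=
        fun i j h1 h2 h3 => hmono i j h1 h2 (by omega)
      have IH := ih hmono'
      set d := ((Icc 1 K).filter fun p => α p ≤ α (K + 1) + m).card with hd
      have hdK : d ≤ K := by
        rw [hd]
        have := Finset.card_filter_le (Icc 1 K) (fun p => α p ≤ α (K + 1) + m)
        rw [Nat.card_Icc] at this
        omega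
      have hS : (Icc 1 K).filter (fun p => α p ≤ α (K + 1) + m) = Icc (K + 1 - d) K := by
        rw [hd]
        exact filter_upward K _
          (fun r r' h1 h2 h3 hp => le_trans (hmono r r' h1 h2 (by omega)) hp)
      have hIccK1 : Icc 1 (K + 1) = insert (K + 1) (Icc 1 K) := by
        ext t; simp only [Finset.mem_insert, Finset.mem_Icc]; omega
      have hnotmem : (K + 1) ∉ Icc 1 K := by simp [Finset.mem_Icc]
      rw [hIccK1, Finset.insert_val_of_notMem hnotmem, Multiset.map_cons, Multiset.map_cons]
      rw [Nat.add_sub_cancel]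
      have hhead : ((Icc (K + 1 + 1) (K + 1)).filter fun q => α (K + 1) ≤ α q + m).card
          = 0 := by
        rw [show Icc (K + 1 + 1) (K + 1) = ∅ from Finset.Icc_eq_empty (by omega)]
        simp
      rw [hhead, ← hd]
      -- inner filters of LHS tail/RHS tail
      have hA1 : ∀ r ∈ Icc 1 (K - d),
          ((Icc (r + 1) (K + 1)).filter fun q => α r ≤ α q + m).card
            = ((Icc (r + 1) K).filter fun q => α r ≤ α q + m).card := by
        intro r hr
        rw [Finset.mem_Icc] at hr
        have hIccr : Icc (r + 1) (K + 1) = insert (K + 1) (Icc (r + 1) K) := by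
          ext t; simp only [Finset.mem_insert, Finset.mem_Icc]; omega
        have hnm : (K + 1) ∉ Icc (r + 1) K := by simp [Finset.mem_Icc]
        rw [hIccr, Finset.filter_insert, if_neg]
        intro hcon
        have hmem : r ∈ (Icc 1 K).filter (fun p => α p ≤ α (K + 1) + m) :=
          Finset.mem_filter.2 ⟨Finset.mem_Icc.2 ⟨hr.1, by omega⟩, hcon⟩
        rw [hS, Finset.mem_Icc] at hmem
        omega
      have hB1 : ∀ r ∈ Icc (K - d + 1) K,
          ((Icc (r + 1) (K + 1)).filter fun q => α r ≤ α q + m).card = K + 1 - r := by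
        intro r hr
        rw [Finset.mem_Icc] at hr
        have hmem : r ∈ (Icc 1 K).filter (fun p => α p ≤ α (K + 1) + m) := by
          rw [hS, Finset.mem_Icc]; omega
        have hrc : α r ≤ α (K + 1) + m := (Finset.mem_filter.1 hmem).2
        rw [Finset.filter_true_of_mem, Nat.card_Icc]
        · omega
        · intro q hq
          rw [Finset.mem_Icc] at hq
          have := hmono q (K + 1) (by omega) hq.2 le_rfl
          omega
      have hB0 : ∀ r ∈ Icc (K - d + 1) K,
          ((Icc (r + 1) K).filter fun q => α r ≤ α q + m).card = K - r := by
        intro r hr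
        rw [Finset.mem_Icc] at hr
        have hmem : r ∈ (Icc 1 K).filter (fun p => α p ≤ α (K + 1) + m) := by
          rw [hS, Finset.mem_Icc]; omega
        have hrc : α r ≤ α (K + 1) + m := (Finset.mem_filter.1 hmem).2
        rw [Finset.filter_true_of_mem, Nat.card_Icc]
        · omega
        · intro q hq
          rw [Finset.mem_Icc] at hq
          have := hmono q (K + 1) (by omega) (by omega) le_rfl
          omega
      rw [IH]
      have hsplit := Icc_val_split 1 (K - d) K (by omega) (by omega)
      rw [hsplit, Multiset.map_add, Multiset.map_add]
      have e1 : (Icc 1 (K - d)).val.map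
            (fun r => ((Icc (r + 1) (K + 1)).filter fun q => α r ≤ α q + m).card)
          = (Icc 1 (K - d)).val.map
            (fun r => ((Icc (r + 1) K).filter fun q => α r ≤ α q + m).card) :=
        Multiset.map_congr rfl (fun r hr => hA1 r (by rwa [Finset.mem_val] at hr))
      have e2 : (Icc (K - d + 1) K).val.map
            (fun r => ((Icc (r + 1) K).filter fun q => α r ≤ α q + m).card)
          = (range d).val := by
        rw [map_Icc_rev, show K + 1 - (K - d + 1) = d from by omega]
        have : ∀ t ∈ (range d).val,
            ((Icc (K - t + 1) K).filter fun q => α (K - t) ≤ α q + m).card = t := by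
          intro t ht
          rw [Finset.mem_val, Finset.mem_range] at ht
          have := hB0 (K - t) (Finset.mem_Icc.2 ⟨by omega, by omega⟩)
          omega
        rw [Multiset.map_congr rfl this, Multiset.map_id']
      have e3 : (Icc (K - d + 1) K).val.map
            (fun r => ((Icc (r + 1) (K + 1)).filter fun q => α r ≤ α q + m).card)
          = (range d).val.map (fun t => t + 1) := by
        rw [map_Icc_rev, show K + 1 - (K - d + 1) = d from by omega]
        apply Multiset.map_congr rfl
        intro t ht
        rw [Finset.mem_val, Finset.mem_range] at ht
        have := hB1 (K - t) (Finset.mem_Icc.2 ⟨by omega, by omega⟩)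
        omega
      rw [e1, e2, e3, ← Multiset.add_cons, ← Multiset.add_cons]
      congr 1
      exact range_cons d
end RV

/-- Regev–Vershik conjecture: the multiset of hook lengths of `SQ` is the
disjoint union of those of `R` and of `D`. -/
theorem hook_SQ_eq_R_union_D (n k : ℕ) (α : ℕ → ℕ) (hn : 0 < n) (hk : 0 < k)
    (hα1 : α 1 ≤ n) (hmono : ∀ i j, 1 ≤ i → i ≤ j → j ≤ k → α j ≤ α i) :
    hookMS (SQ n k α) = hookMS (RR n k) + hookMS (DD k α) := by
  open Finset in
  rw [RV.hookMS_SQ n k α hn hk hα1 hmono, RV.hookMS_RR n k hn, RV.hookMS_DD k α hk hmono]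
  -- Step 1: TFLIP
  have tflip : (∑ i ∈ Icc 1 k, (range n).val.map
        (fun m => m + 1 + ((Icc 1 (i - 1)).filter fun p => α p ≤ α i + m).card))
      = ∑ r ∈ Icc 1 k, (range n).val.map
        (fun m => m + 1 + ((Icc (r + 1) k).filter fun q => α r ≤ α q + m).card) := by
    rw [RV.swap0 (Icc 1 k) (range n)
        (fun i m => m + 1 + ((Icc 1 (i - 1)).filter fun p => α p ≤ α i + m).card),
      RV.swap0 (Icc 1 k) (range n)
        (fun r m => m + 1 + ((Icc (r + 1) k).filter fun q => α r ≤ α q + m).card)]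
    apply Finset.sum_congr rfl
    intro m _
    have hdeg := congrArg (Multiset.map (fun c => m + 1 + c)) (RV.degree k α m hmono)
    rw [Multiset.map_map, Multiset.map_map] at hdeg
    exact hdeg
  rw [tflip]
  -- Step 2: split the flipped T-part at α r
  have splitT : ∀ r ∈ Icc 1 k, (range n).val.map
        (fun m => m + 1 + ((Icc (r + 1) k).filter fun q => α r ≤ α q + m).card)
      = (range (α r)).val.map
          (fun m => m + 1 + ((Icc (r + 1) k).filter fun q => α r ≤ α q + m).card)
        + (Icc (α r) (n - 1)).val.map (fun m => m + (k + 1 - r)) := by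
    intro r hr
    rw [Finset.mem_Icc] at hr
    have har : α r ≤ n := le_trans (hmono 1 r le_rfl hr.1 hr.2) hα1
    rw [RV.range_val_split (α r) n har hn, Multiset.map_add]
    congr 1
    apply Multiset.map_congr rfl
    intro m hm
    rw [Finset.mem_val, Finset.mem_Icc] at hm
    have hfull : (Icc (r + 1) k).filter (fun q => α r ≤ α q + m) = Icc (r + 1) k := by
      apply Finset.filter_true_of_mem
      intro q hq
      rw [Finset.mem_Icc] at hq
      omega
    rw [hfull, Nat.card_Icc]
    omega
  rw [Finset.sum_congr rfl splitT, Finset.sum_add_distrib]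
  -- Step 3: V part, column reflection
  have vpart : (∑ r ∈ Icc 1 k, (range (α r)).val.map
        (fun m => m + r + ((Icc 1 k).filter fun p => α p ≤ m).card))
      = ∑ r ∈ Icc 1 k, (range (α r)).val.map (fun m => m + (k + 1 - r)) := by
    have hconv : ∀ (F : ℕ → ℕ → ℕ), ∀ r ∈ Icc 1 k,
        (range (α r)).val.map (fun m => F r m)
          = (((range n).filter fun m => m < α r).val.map fun m => F r m) := by
      intro F r hr
      rw [Finset.mem_Icc] at hr
      have har : α r ≤ n := le_trans (hmono 1 r le_rfl hr.1 hr.2) hα1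
      have : (range (α r)) = (range n).filter fun m => m < α r := by
        ext t
        simp only [Finset.mem_filter, Finset.mem_range]
        omega
      rw [this]
    rw [Finset.sum_congr rfl (hconv (fun r m => m + r + ((Icc 1 k).filter fun p => α p ≤ m).card)),
      Finset.sum_congr rfl (hconv (fun r m => m + (k + 1 - r))),
      RV.swap1 (Icc 1 k) (range n) (fun r m => m < α r)
        (fun r m => m + r + ((Icc 1 k).filter fun p => α p ≤ m).card),
      RV.swap1 (Icc 1 k) (range n) (fun r m => m < α r) (fun r m => m + (k + 1 - r))]
    apply Finset.sum_congr rfl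
    intro m _
    have hhk : ((Icc 1 k).filter fun r => m < α r).card ≤ k := by
      have := Finset.card_filter_le (Icc 1 k) (fun r => m < α r)
      rw [Nat.card_Icc] at this
      omega
    have hfd : (Icc 1 k).filter (fun r => m < α r)
        = Icc 1 ((Icc 1 k).filter fun r => m < α r).card :=
      RV.filter_downward k _ (fun r r' h1 h2 h3 hp => lt_of_lt_of_le hp (hmono r r' h1 h2 h3))
    have hg : ((Icc 1 k).filter fun p => α p ≤ m).card
        = k - ((Icc 1 k).filter fun r => m < α r).card := by
      have hsum := Finset.card_filter_add_card_filter_not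
        (s := Icc 1 k) (p := fun r => m < α r)
      have hcompl : (Icc 1 k).filter (fun r => ¬ m < α r)
          = (Icc 1 k).filter (fun p => α p ≤ m) :=
        Finset.filter_congr (fun x _ => by omega)
      rw [hcompl, Nat.card_Icc] at hsum
      omega
    set h := ((Icc 1 k).filter fun r => m < α r).card with hh
    rw [hfd, hg]
    rw [RV.map_Icc_fwd 1 h (fun r => m + r + (k - h)),
      RV.map_Icc_rev 1 h (fun r => m + (k + 1 - r)), Nat.add_sub_cancel]
    apply Multiset.map_congr rfl
    intro t ht
    rw [Finset.mem_val, Finset.mem_range] at ht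
    omega
  rw [vpart]
  -- Step 4: glue tails with V part into R
  have hglue : (∑ r ∈ Icc 1 k, (Icc (α r) (n - 1)).val.map (fun m => m + (k + 1 - r)))
      + (∑ r ∈ Icc 1 k, (range (α r)).val.map (fun m => m + (k + 1 - r)))
      = ∑ i ∈ Icc 1 k, (range n).val.map (fun m => m + i) := by
    rw [← Finset.sum_add_distrib]
    have hcomb : ∀ r ∈ Icc 1 k,
        ((Icc (α r) (n - 1)).val.map (fun m => m + (k + 1 - r))
          + (range (α r)).val.map (fun m => m + (k + 1 - r)))
        = (range n).val.map (fun m => m + (k + 1 - r)) := by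
      intro r hr
      rw [Finset.mem_Icc] at hr
      have har : α r ≤ n := le_trans (hmono 1 r le_rfl hr.1 hr.2) hα1
      rw [RV.range_val_split (α r) n har hn, Multiset.map_add, add_comm]
    rw [Finset.sum_congr rfl hcomb]
    apply Finset.sum_nbij' (fun r => k + 1 - r) (fun i => k + 1 - i)
    · intro a ha; rw [Finset.mem_Icc] at ha ⊢; omega
    · intro a ha; rw [Finset.mem_Icc] at ha ⊢; omega
    · intro a ha; rw [Finset.mem_Icc] at ha; omega
    · intro a ha; rw [Finset.mem_Icc] at ha; omega
    · intro a _; rfl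
  rw [add_assoc, hglue, add_comm]
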